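/- Let μ be a Borel probability measure on ℝ^d, let α be a k-flat (0 ≤ k < d), let π_α : ℝ^d → α^⊥ be orthogonal projection along α, and let μ_α be the pushforward of μ. Then depth_{μ_α}(π_α(α)) = depth_μ(α), i.e., the half-space depth of the point π_α(α) with respect to the projected measure equals the half-space depth of the flat α with respect to μ. -/

import Mathlib

open MeasureTheory

/-- The half-space (Tukey) depth of a point in an inner product space. -/
noncomputable def depthPt {W : Type*} [NormedAddCommGroup W] [InnerProductSpace ℝ W]
    [MeasurableSpace W] (ν : Measure W) (x : W) : ℝ :=
  sInf {r : ℝ | ∃ (m : W) (c : ℝ), m ≠ 0 ∧ (inner ℝ m x : ℝ) ≤ c ∧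
    r = (ν {y : W | (inner ℝ m y : ℝ) ≤ c}).toReal}

/-- The half-space depth of a set (e.g. a flat) `α`. -/
noncomputable def depthFlat (m : ℕ) (μ : Measure (EuclideanSpace ℝ (Fin m)))
    (α : Set (EuclideanSpace ℝ (Fin m))) : ℝ :=
  sInf {r : ℝ | ∃ (v : EuclideanSpace ℝ (Fin m)) (c : ℝ), v ≠ 0 ∧
    (∀ x ∈ α, (inner ℝ v x : ℝ) ≤ c) ∧
    r = (μ {y : EuclideanSpace ℝ (Fin m) | (inner ℝ v y : ℝ) ≤ c}).toReal}

theorem stmt17 (d k : ℕ) (hk : k < d)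
    (μ : Measure (EuclideanSpace ℝ (Fin d))) [IsProbabilityMeasure μ]
    (α : AffineSubspace ℝ (EuclideanSpace ℝ (Fin d)))
    (hne : (α : Set (EuclideanSpace ℝ (Fin d))).Nonempty)
    (hdim : Module.finrank ℝ α.direction = k)
    (a : EuclideanSpace ℝ (Fin d)) (ha : a ∈ α) :
    depthPt (μ.map (fun x => α.directionᗮ.orthogonalProjectionOnto x))
        (α.directionᗮ.orthogonalProjectionOnto a) =
      depthFlat d μ (α : Set (EuclideanSpace ℝ (Fin d))) := by
  classical
  set K := α.directionᗮ with hK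
  -- inner of an element of K with x equals inner with the projection
  have key : ∀ (m : K) (x : EuclideanSpace ℝ (Fin d)),
      (inner ℝ (m : EuclideanSpace ℝ (Fin d)) x : ℝ) = inner ℝ m (K.orthogonalProjectionOnto x) := by
    intro m x
    have h1 : x - (K.orthogonalProjectionOnto x : EuclideanSpace ℝ (Fin d)) ∈ Kᗮ :=
      K.sub_starProjection_mem_orthogonal x
    have h2 : (inner ℝ (m : EuclideanSpace ℝ (Fin d))
        (x - (K.orthogonalProjectionOnto x : EuclideanSpace ℝ (Fin d))) : ℝ) = 0 :=
      (Submodule.mem_orthogonal K _).mp h1 _ m.2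
    rw [inner_sub_right] at h2
    rw [Submodule.coe_inner]
    linarith
  have hmeas : Measurable (fun x => K.orthogonalProjectionOnto x) :=
    (K.orthogonalProjectionOnto).continuous.measurable
  have hmapset : ∀ (m : K) (c : ℝ),
      (μ.map (fun x => K.orthogonalProjectionOnto x))
          {y : K | (inner ℝ m y : ℝ) ≤ c}
        = μ {y : EuclideanSpace ℝ (Fin d) | (inner ℝ (m : EuclideanSpace ℝ (Fin d)) y : ℝ) ≤ c} := by
    intro m c
    rw [Measure.map_apply hmeas]
    · congr 1
      ext x
      simp only [Set.mem_preimage, Set.mem_setOf_eq, key]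
    · exact measurableSet_le ((Continuous.inner continuous_const continuous_id).measurable) measurable_const
  unfold depthPt depthFlat
  congr 1
  ext r
  constructor
  · rintro ⟨m, c, hm, hmc, rfl⟩
    refine ⟨(m : EuclideanSpace ℝ (Fin d)), c, by simpa using hm, ?_, ?_⟩
    · intro x hx
      have hxd : x - a ∈ α.direction := AffineSubspace.vsub_mem_direction hx ha
      have hz : (inner ℝ (m : EuclideanSpace ℝ (Fin d)) (x - a) : ℝ) = 0 := by
        rw [real_inner_comm]; exact m.2 _ hxd
      rw [inner_sub_right] at hz
      have : (inner ℝ (m : EuclideanSpace ℝ (Fin d)) x : ℝ)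
          = inner ℝ (m : EuclideanSpace ℝ (Fin d)) a := by linarith
      rw [this, key]
      exact hmc
    · rw [hmapset]
  · rintro ⟨v, c, hv, hvc, rfl⟩
    have hvK : v ∈ K := by
      intro w hw
      by_contra hne0
      have hs : (inner ℝ w v : ℝ) ≠ 0 := hne0
      have hvw : (inner ℝ v w : ℝ) ≠ 0 := by
        rwa [real_inner_comm] at hs
      set s := (inner ℝ v w : ℝ) with hsdef
      set t := (c - (inner ℝ v a : ℝ) + 1) / s with htdef
      have hmem : t • w +ᵥ a ∈ α :=
        AffineSubspace.vadd_mem_of_mem_direction (Submodule.smul_mem _ t hw) ha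
      have := hvc _ hmem
      have hadd : (inner ℝ v (t • w +ᵥ a) : ℝ) = t * s + inner ℝ v a := by
        show (inner ℝ v (t • w + a) : ℝ) = _
        rw [inner_add_right, real_inner_smul_right]
      rw [hadd] at this
      have hts : t * s = c - (inner ℝ v a : ℝ) + 1 := by
        rw [htdef]; field_simp
      rw [hts] at this
      linarith
    refine ⟨⟨v, hvK⟩, c, ?_, ?_, ?_⟩
    · simpa using hv
    · rw [← key ⟨v, hvK⟩ a]
      exact hvc a ha
    · rw [hmapset]
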